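/- Let n ≥ 27 be odd. Any four pairwise distinct subsets L₁, L₂, L₃, L₄ of [n], each of size at least (n+1)/2, form a Berge four-cycle in some cyclic order. -/

import Mathlib

open Finset in
private lemma bc4_inter_card_lb {n : ℕ} (X Y : Finset (Fin n)) :
    X.card + Y.card ≤ n + (X ∩ Y).card := by
  have h1 := Finset.card_union_add_card_inter X Y
  have h2 : (X ∪ Y).card ≤ n := by
    have := Finset.card_le_card (Finset.subset_univ (X ∪ Y))
    simpa using this
  omega

open Finset in
private lemma bc4_inter_nonempty {n : ℕ} {X Y : Finset (Fin n)} (hX : n + 1 ≤ 2 * X.card)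
    (hY : n + 1 ≤ 2 * Y.card) : (X ∩ Y).Nonempty := by
  rw [← Finset.card_pos]
  have h1 := bc4_inter_card_lb X Y
  omega

open Finset in
private lemma bc4_key_bound {n : ℕ} {P Q R U : Finset (Fin n)}
    (hQ : P ∩ Q ⊆ U) (hR : P ∩ R ⊆ U) :
    P.card + Q.card + R.card ≤ n + (Q ∩ R).card + U.card := by
  have hsub : Q ∪ R ⊆ (univ \ P) ∪ U := by
    intro x hx
    rcases mem_union.1 hx with h | h
    · by_cases hp : x ∈ P
      · exact mem_union_right _ (hQ (mem_inter.2 ⟨hp, h⟩))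
      · exact mem_union_left _ (mem_sdiff.2 ⟨mem_univ x, hp⟩)
    · by_cases hp : x ∈ P
      · exact mem_union_right _ (hR (mem_inter.2 ⟨hp, h⟩))
      · exact mem_union_left _ (mem_sdiff.2 ⟨mem_univ x, hp⟩)
  have h1 : (Q ∪ R).card ≤ (univ \ P).card + U.card :=
    (card_le_card hsub).trans (card_union_le _ _)
  have h2 : (univ \ P).card = n - P.card := by
    rw [card_sdiff_of_subset (subset_univ P)]; simp
  have h3 := Finset.card_union_add_card_inter Q R
  have h4 : P.card ≤ n := by simpa using card_le_card (subset_univ P)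
  omega

open Finset in
private lemma bc4_eq_of_two_small_inters {n : ℕ} {P Q R : Finset (Fin n)} {x : Fin n}
    (hP : n + 1 ≤ 2 * P.card) (hQc : n + 1 ≤ 2 * Q.card) (hRc : n + 1 ≤ 2 * R.card)
    (hQ : P ∩ Q ⊆ {x}) (hR : P ∩ R ⊆ {x}) : Q = R := by
  have h := bc4_key_bound hQ hR
  have hx : ({x} : Finset (Fin n)).card = 1 := card_singleton x
  have e1 : Q ∩ R = Q := Finset.eq_of_subset_of_card_le inter_subset_left (by omega)
  have e2 : Q ∩ R = R := Finset.eq_of_subset_of_card_le inter_subset_right (by omega)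
  exact e1.symm.trans e2

open Finset in
private lemma bc4_adj_union_five {n : ℕ} {P Q R : Finset (Fin n)} (hn : 27 ≤ n)
    (hP : n + 1 ≤ 2 * P.card) (hQc : n + 1 ≤ 2 * Q.card) (hRc : n + 1 ≤ 2 * R.card)
    (hd : (Q ∩ R).card ≤ 10) : 5 ≤ ((Q ∩ P) ∪ (P ∩ R)).card := by
  have h := bc4_key_bound (P := P) (Q := Q) (R := R) (U := (Q ∩ P) ∪ (P ∩ R))
    (fun y hy => mem_union_left _ (by rw [inter_comm] at hy; exact hy))
    (fun y hy => mem_union_right _ hy)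
  omega

open Finset in
private lemma bc4_incident_union_two {n : ℕ} {P Q R : Finset (Fin n)}
    (hP : n + 1 ≤ 2 * P.card) (hQc : n + 1 ≤ 2 * Q.card) (hRc : n + 1 ≤ 2 * R.card)
    (hQR : Q ≠ R) : 2 ≤ ((P ∩ Q) ∪ (P ∩ R)).card := by
  by_contra hcon
  push_neg at hcon
  obtain ⟨x, hx⟩ := bc4_inter_nonempty hP hQc
  have hone : ((P ∩ Q) ∪ (P ∩ R)).card ≤ 1 := by omega
  have hsub : ∀ y ∈ (P ∩ Q) ∪ (P ∩ R), y = x := fun y hy =>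
    Finset.card_le_one.1 hone y hy x (mem_union_left _ hx)
  exact hQR (bc4_eq_of_two_small_inters hP hQc hRc
    (fun y hy => mem_singleton.2 (hsub y (mem_union_left _ hy)))
    (fun y hy => mem_singleton.2 (hsub y (mem_union_right _ hy))))

open Finset in
private lemma bc4_union_two_of_not_same_singleton {n : ℕ} {A B : Finset (Fin n)}
    (hA : A.Nonempty) (hB : B.Nonempty)
    (h : ¬ ∃ x, A = {x} ∧ B = {x}) : 2 ≤ (A ∪ B).card := by
  by_contra hc
  push_neg at hc
  obtain ⟨a, ha⟩ := hA
  have hone : (A ∪ B).card ≤ 1 := by omega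
  have hsub : ∀ y ∈ A ∪ B, y = a := fun y hy =>
    Finset.card_le_one.1 hone y hy a (mem_union_left _ ha)
  refine h ⟨a, ?_, ?_⟩
  · rcases Finset.subset_singleton_iff.1
      (fun y hy => mem_singleton.2 (hsub y (mem_union_left _ hy))) with h' | h'
    · exact absurd h' (Finset.nonempty_iff_ne_empty.1 ⟨a, ha⟩)
    · exact h'
  · rcases Finset.subset_singleton_iff.1
      (fun y hy => mem_singleton.2 (hsub y (mem_union_right _ hy))) with h' | h'
    · exact absurd h' (Finset.nonempty_iff_ne_empty.1 hB)
    · exact h'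

open Finset in
private lemma bc4_two_distinct {n : ℕ} {A B : Finset (Fin n)} (hA : A.Nonempty)
    (hB : B.Nonempty) (h : 2 ≤ (A ∪ B).card) : ∃ a ∈ A, ∃ b ∈ B, a ≠ b := by
  obtain ⟨a, ha⟩ := hA; obtain ⟨b, hb⟩ := hB
  by_cases hab : a = b
  · subst hab
    obtain ⟨c, hc, hca⟩ := Finset.exists_mem_ne (s := A ∪ B) (by omega) a
    rcases mem_union.1 hc with h' | h'
    · exact ⟨c, h', a, hb, hca⟩
    · exact ⟨a, ha, c, h', fun heq => hca heq.symm⟩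
  · exact ⟨a, ha, b, hb, hab⟩

open Finset in
private lemma bc4_sdiff_card_ge {α : Type*} [DecidableEq α] (s t : Finset α) :
    s.card ≤ (s \ t).card + t.card := by
  have hsub : s ⊆ s \ t ∪ t := by
    intro x hx
    by_cases h : x ∈ t
    · exact mem_union_right _ h
    · exact mem_union_left _ (mem_sdiff.2 ⟨hx, h⟩)
  exact (card_le_card hsub).trans (card_union_le _ _)

open Finset in
private lemma bc4_pick_avoid_two {n : ℕ} {s : Finset (Fin n)} (a b : Fin n)
    (h : 3 ≤ s.card) : ∃ c ∈ s, c ≠ a ∧ c ≠ b := by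
  have h1 := bc4_sdiff_card_ge s {a, b}
  have h2 : ({a, b} : Finset (Fin n)).card ≤ 2 :=
    (Finset.card_insert_le _ _).trans (by simp)
  have h3 : (s \ {a, b}).Nonempty := by rw [← card_pos]; omega
  obtain ⟨c, hc⟩ := h3
  rw [mem_sdiff] at hc
  have := hc.2
  simp only [mem_insert, mem_singleton] at this
  push_neg at this
  exact ⟨c, hc.1, this⟩

open Finset in
private lemma bc4_pick_avoid_three {n : ℕ} {s : Finset (Fin n)} (a b c : Fin n)
    (h : 4 ≤ s.card) : ∃ d ∈ s, d ≠ a ∧ d ≠ b ∧ d ≠ c := by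
  have h1 := bc4_sdiff_card_ge s {a, b, c}
  have h2 : ({a, b, c} : Finset (Fin n)).card ≤ 3 := by
    apply le_trans (Finset.card_insert_le _ _)
    have := (Finset.card_insert_le b ({c} : Finset (Fin n)))
    simp at this ⊢; omega
  have h3 : (s \ {a, b, c}).Nonempty := by rw [← card_pos]; omega
  obtain ⟨d, hd⟩ := h3
  rw [mem_sdiff] at hd
  have := hd.2
  simp only [mem_insert, mem_singleton] at this
  push_neg at this
  exact ⟨d, hd.1, this⟩

open Finset in
private lemma bc4_pick4 {n : ℕ} {f1 f2 f3 f4 : Finset (Fin n)} (h1 : f1.Nonempty)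
    (h3 : f3.Nonempty) (h2 : 3 ≤ f2.card) (h4 : 3 ≤ f4.card)
    (h13 : 2 ≤ (f1 ∪ f3).card) (h12 : 5 ≤ (f1 ∪ f2).card) :
    ∃ x₁ ∈ f1, ∃ x₂ ∈ f2, ∃ x₃ ∈ f3, ∃ x₄ ∈ f4,
      x₁ ≠ x₂ ∧ x₁ ≠ x₃ ∧ x₁ ≠ x₄ ∧ x₂ ≠ x₃ ∧ x₂ ≠ x₄ ∧ x₃ ≠ x₄ := by
  obtain ⟨x₁, hx1, x₃, hx3, h13'⟩ := bc4_two_distinct h1 h3 h13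
  by_cases hc : (f2 \ (f4 ∪ {x₁, x₃})).Nonempty
  · obtain ⟨x₂, hx2⟩ := hc
    rw [mem_sdiff] at hx2
    have hnx2 := hx2.2
    simp only [mem_union, mem_insert, mem_singleton] at hnx2
    push_neg at hnx2
    obtain ⟨x₄, hx4, hx41, hx43⟩ := bc4_pick_avoid_two x₁ x₃ h4
    exact ⟨x₁, hx1, x₂, hx2.1, x₃, hx3, x₄, hx4,
      fun he => hnx2.2.1 he.symm, h13', fun he => hx41 he.symm,
      fun he => hnx2.2.2 he, fun he => hnx2.1 (he ▸ hx4), fun he => hx43 he.symm⟩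
  · have hsub2 : f2 ⊆ f4 ∪ {x₁, x₃} := by
      intro y hy
      by_contra hny
      exact hc ⟨y, mem_sdiff.2 ⟨hy, hny⟩⟩
    obtain ⟨x₂, hx2, hx21, hx23⟩ := bc4_pick_avoid_two x₁ x₃ h2
    by_cases hd : (f4 \ {x₁, x₂, x₃}).Nonempty
    · obtain ⟨x₄, hx4⟩ := hd
      rw [mem_sdiff] at hx4
      have hnx4 := hx4.2
      simp only [mem_insert, mem_singleton] at hnx4
      push_neg at hnx4
      exact ⟨x₁, hx1, x₂, hx2, x₃, hx3, x₄, hx4.1,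
        fun he => hx21 he.symm, h13', fun he => hnx4.1 he.symm,
        hx23, fun he => hnx4.2.1 he.symm, fun he => hnx4.2.2 he.symm⟩
    · have hsub4 : f4 ⊆ {x₁, x₂, x₃} := by
        intro y hy
        by_contra hny
        exact hd ⟨y, mem_sdiff.2 ⟨hy, hny⟩⟩
      have hcard : ({x₁, x₂, x₃} : Finset (Fin n)).card ≤ 3 := by
        apply le_trans (Finset.card_insert_le _ _)
        have := (Finset.card_insert_le x₂ ({x₃} : Finset (Fin n)))
        simp at this ⊢; omega
      have he4 : f4 = {x₁, x₂, x₃} :=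
        Finset.eq_of_subset_of_card_le hsub4 (by omega)
      have hsub2' : f2 ⊆ {x₁, x₂, x₃} := by
        intro y hy
        rcases mem_union.1 (hsub2 hy) with h' | h'
        · exact he4 ▸ h'
        · simp only [mem_insert, mem_singleton] at h' ⊢
          rcases h' with h' | h'
          · exact Or.inl h'
          · exact Or.inr (Or.inr h')
      have he2 : f2 = {x₁, x₂, x₃} :=
        Finset.eq_of_subset_of_card_le hsub2' (by omega)
      have hun : (f1 ∪ f2).card ≤ (f1 \ f2).card + f2.card := by
        have hss : f1 ∪ f2 ⊆ (f1 \ f2) ∪ f2 := by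
          intro y hy
          rcases mem_union.1 hy with h' | h'
          · by_cases hy2 : y ∈ f2
            · exact mem_union_right _ hy2
            · exact mem_union_left _ (mem_sdiff.2 ⟨h', hy2⟩)
          · exact mem_union_right _ h'
        exact (card_le_card hss).trans (card_union_le _ _)
      have hf2c : f2.card ≤ 3 := he2 ▸ hcard
      have hane : (f1 \ f2).Nonempty := by rw [← card_pos]; omega
      obtain ⟨a, ha⟩ := hane
      rw [mem_sdiff] at ha
      have hna : a ≠ x₁ ∧ a ≠ x₂ ∧ a ≠ x₃ := by
        have := ha.2
        rw [he2] at this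
        simp only [mem_insert, mem_singleton] at this
        push_neg at this
        exact this
      have hx1f4 : x₁ ∈ f4 := by rw [he4]; simp
      exact ⟨a, ha.1, x₂, hx2, x₃, hx3, x₁, hx1f4,
        hna.2.1, hna.2.2, hna.1, hx23, hx21, fun he => h13' he.symm⟩

open Finset in
private lemma bc4_pick4' {n : ℕ} {f1 f2 f3 f4 : Finset (Fin n)} (h1 : f1.Nonempty)
    (h2 : f2.Nonempty) (h12 : 2 ≤ (f1 ∪ f2).card) (h3 : 3 ≤ f3.card) (h4 : 4 ≤ f4.card) :
    ∃ x₁ ∈ f1, ∃ x₂ ∈ f2, ∃ x₃ ∈ f3, ∃ x₄ ∈ f4,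
      x₁ ≠ x₂ ∧ x₁ ≠ x₃ ∧ x₁ ≠ x₄ ∧ x₂ ≠ x₃ ∧ x₂ ≠ x₄ ∧ x₃ ≠ x₄ := by
  obtain ⟨x₁, hx1, x₂, hx2, h12'⟩ := bc4_two_distinct h1 h2 h12
  obtain ⟨x₃, hx3, hx31, hx32⟩ := bc4_pick_avoid_two x₁ x₂ h3
  obtain ⟨x₄, hx4, hx41, hx42, hx43⟩ := bc4_pick_avoid_three x₁ x₂ x₃ h4
  exact ⟨x₁, hx1, x₂, hx2, x₃, hx3, x₄, hx4,
    h12', fun he => hx31 he.symm, fun he => hx41 he.symm,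
    fun he => hx32 he.symm, fun he => hx42 he.symm, fun he => hx43 he.symm⟩

open Finset in
private lemma bc4_two_bad {n : ℕ} {P Q R S : Finset (Fin n)}
    (hP : n + 1 ≤ 2 * P.card) (hQc : n + 1 ≤ 2 * Q.card) (hRc : n + 1 ≤ 2 * R.card)
    (hQR : Q ≠ R)
    (h1 : ∃ x, P ∩ Q = {x} ∧ R ∩ S = {x})
    (h2 : ∃ y, P ∩ R = {y} ∧ Q ∩ S = {y}) : False := by
  obtain ⟨x, hx1, hx2⟩ := h1
  obtain ⟨y, hy1, hy2⟩ := h2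
  have hxPQ : x ∈ P ∩ Q := by rw [hx1]; exact mem_singleton_self x
  have hxRS : x ∈ R ∩ S := by rw [hx2]; exact mem_singleton_self x
  have hxPR : x ∈ P ∩ R := mem_inter.2 ⟨(mem_inter.1 hxPQ).1, (mem_inter.1 hxRS).1⟩
  rw [hy1, mem_singleton] at hxPR
  subst hxPR
  exact hQR (bc4_eq_of_two_small_inters hP hQc hRc hx1.le hy1.le)

open Finset in
private lemma bc4_cycleFour {n : ℕ} {W X Y Z : Finset (Fin n)} (hn : 27 ≤ n)
    (hW : n + 1 ≤ 2 * W.card) (hX : n + 1 ≤ 2 * X.card)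
    (hY : n + 1 ≤ 2 * Y.card) (hZ : n + 1 ≤ 2 * Z.card)
    (dWY : (W ∩ Y).card ≤ 10) (dXZ : (X ∩ Z).card ≤ 10)
    (nb1 : ¬ ∃ x, W ∩ X = {x} ∧ Y ∩ Z = {x})
    (nb2 : ¬ ∃ x, X ∩ Y = {x} ∧ Z ∩ W = {x}) :
    ∃ x₁ x₂ x₃ x₄ : Fin n,
      (x₁ ≠ x₂ ∧ x₁ ≠ x₃ ∧ x₁ ≠ x₄ ∧ x₂ ≠ x₃ ∧ x₂ ≠ x₄ ∧ x₃ ≠ x₄) ∧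
      x₁ ∈ W ∩ X ∧ x₂ ∈ X ∩ Y ∧ x₃ ∈ Y ∩ Z ∧ x₄ ∈ Z ∩ W := by
  have ne1 : (W ∩ X).Nonempty := bc4_inter_nonempty hW hX
  have ne2 : (X ∩ Y).Nonempty := bc4_inter_nonempty hX hY
  have ne3 : (Y ∩ Z).Nonempty := bc4_inter_nonempty hY hZ
  have ne4 : (Z ∩ W).Nonempty := bc4_inter_nonempty hZ hW
  have dYW : (Y ∩ W).card ≤ 10 := by rwa [inter_comm] at dWY
  have dZX : (Z ∩ X).card ≤ 10 := by rwa [inter_comm] at dXZ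
  have u12 : 5 ≤ ((W ∩ X) ∪ (X ∩ Y)).card := bc4_adj_union_five hn hX hW hY dWY
  have u23 : 5 ≤ ((X ∩ Y) ∪ (Y ∩ Z)).card := bc4_adj_union_five hn hY hX hZ dXZ
  have u34 : 5 ≤ ((Y ∩ Z) ∪ (Z ∩ W)).card := bc4_adj_union_five hn hZ hY hW dYW
  have u41 : 5 ≤ ((Z ∩ W) ∪ (W ∩ X)).card := bc4_adj_union_five hn hW hZ hX dZX
  have o13 : 2 ≤ ((W ∩ X) ∪ (Y ∩ Z)).card :=
    bc4_union_two_of_not_same_singleton ne1 ne3 nb1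
  have o24 : 2 ≤ ((X ∩ Y) ∪ (Z ∩ W)).card :=
    bc4_union_two_of_not_same_singleton ne2 ne4 nb2
  by_cases htiny : 3 ≤ (X ∩ Y).card ∧ 3 ≤ (Z ∩ W).card
  · obtain ⟨x₁, m1, x₂, m2, x₃, m3, x₄, m4, d⟩ :=
      bc4_pick4 ne1 ne3 htiny.1 htiny.2 o13 u12
    exact ⟨x₁, x₂, x₃, x₄, d, m1, m2, m3, m4⟩
  · have c12 := card_union_le (W ∩ X) (X ∩ Y)
    have c23 := card_union_le (X ∩ Y) (Y ∩ Z)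
    have c34 := card_union_le (Y ∩ Z) (Z ∩ W)
    have c41 := card_union_le (Z ∩ W) (W ∩ X)
    have hg : 3 ≤ (Y ∩ Z).card ∧ 3 ≤ (W ∩ X).card := by
      by_cases hg2 : 3 ≤ (X ∩ Y).card
      · have hzw : (Z ∩ W).card < 3 := by
          by_contra hh; push_neg at hh; exact htiny ⟨hg2, hh⟩
        exact ⟨by omega, by omega⟩
      · push_neg at hg2
        exact ⟨by omega, by omega⟩
    obtain ⟨y₁, m1, y₂, m2, y₃, m3, y₄, m4, d12, d13, d14, d23, d24, d34⟩ :=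
      bc4_pick4 ne2 ne4 hg.1 hg.2 o24 u23
    exact ⟨y₄, y₁, y₂, y₃,
      ⟨Ne.symm d14, Ne.symm d24, Ne.symm d34, d12, d13, d23⟩, m4, m1, m2, m3⟩

/-- Four distinct sets `A, B, C, D ⊆ [n]` form a Berge four-cycle in that cyclic order if
there exist pairwise distinct elements `x₁ ∈ A ∩ B`, `x₂ ∈ B ∩ C`, `x₃ ∈ C ∩ D`,
`x₄ ∈ D ∩ A`. -/
def BergeC4 {n : ℕ} (A B C D : Finset (Fin n)) : Prop :=
  A ≠ B ∧ A ≠ C ∧ A ≠ D ∧ B ≠ C ∧ B ≠ D ∧ C ≠ D ∧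
    ∃ x₁ x₂ x₃ x₄ : Fin n,
      x₁ ≠ x₂ ∧ x₁ ≠ x₃ ∧ x₁ ≠ x₄ ∧ x₂ ≠ x₃ ∧ x₂ ≠ x₄ ∧ x₃ ≠ x₄ ∧
      x₁ ∈ A ∩ B ∧ x₂ ∈ B ∩ C ∧ x₃ ∈ C ∩ D ∧ x₄ ∈ D ∩ A

set_option maxHeartbeats 1000000 in
open Finset in
/-- For odd `n ≥ 27`, any four pairwise distinct subsets of `[n]`, each of size at
least `(n + 1) / 2`, form a Berge four-cycle in some cyclic order. -/
theorem four_large_C4_odd (n : ℕ) (hn : 27 ≤ n) (hodd : Odd n)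
    (L₁ L₂ L₃ L₄ : Finset (Fin n))
    (hd : [L₁, L₂, L₃, L₄].Pairwise (· ≠ ·))
    (hL₁ : (n + 1) / 2 ≤ L₁.card) (hL₂ : (n + 1) / 2 ≤ L₂.card)
    (hL₃ : (n + 1) / 2 ≤ L₃.card) (hL₄ : (n + 1) / 2 ≤ L₄.card) :
    ∃ A ∈ ({L₁, L₂, L₃, L₄} : Set (Finset (Fin n))),
      ∃ B ∈ ({L₁, L₂, L₃, L₄} : Set (Finset (Fin n))),
        ∃ C ∈ ({L₁, L₂, L₃, L₄} : Set (Finset (Fin n))),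
          ∃ D ∈ ({L₁, L₂, L₃, L₄} : Set (Finset (Fin n))),
            BergeC4 A B C D := by
  obtain ⟨k, hk⟩ := hodd
  have hc1 : n + 1 ≤ 2 * L₁.card := by omega
  have hc2 : n + 1 ≤ 2 * L₂.card := by omega
  have hc3 : n + 1 ≤ 2 * L₃.card := by omega
  have hc4 : n + 1 ≤ 2 * L₄.card := by omega
  simp only [List.pairwise_cons, List.mem_cons, List.mem_singleton, List.not_mem_nil,
    forall_eq_or_imp, forall_eq, and_true] at hd
  obtain ⟨⟨ne12, ne13, hne14⟩, ⟨ne23, hne24⟩, hne34⟩ := hd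
  have ne14 : L₁ ≠ L₄ := hne14.1
  have ne24 : L₂ ≠ L₄ := hne24.1
  have ne34 : L₃ ≠ L₄ := hne34.1.1
  by_cases hBC : ∃ x, L₁ ∩ L₂ = {x} ∧ L₃ ∩ L₄ = {x}
  · -- bad matching {12,34}: use the cycle L₁-L₃-L₂-L₄ with this matching as diagonals
    obtain ⟨x0, hx01, hx02⟩ := hBC
    have dWY : (L₁ ∩ L₂).card ≤ 10 := by rw [hx01]; simp
    have dXZ : (L₃ ∩ L₄).card ≤ 10 := by rw [hx02]; simp
    have nb1 : ¬ ∃ x, L₁ ∩ L₃ = {x} ∧ L₂ ∩ L₄ = {x} := fun h =>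
      bc4_two_bad hc1 hc2 hc3 ne23 ⟨x0, hx01, hx02⟩ h
    have nb2 : ¬ ∃ x, L₃ ∩ L₂ = {x} ∧ L₄ ∩ L₁ = {x} := by
      rintro ⟨y, hy1, hy2⟩
      rw [inter_comm] at hy1 hy2
      exact bc4_two_bad hc2 hc1 hc3 ne13
        ⟨x0, by rw [inter_comm]; exact hx01, hx02⟩ ⟨y, hy1, hy2⟩
    obtain ⟨x₁, x₂, x₃, x₄, ⟨d12, d13, d14, d23, d24, d34⟩, m1, m2, m3, m4⟩ :=
      bc4_cycleFour hn hc1 hc3 hc2 hc4 dWY dXZ nb1 nb2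
    exact ⟨L₁, by simp, L₃, by simp, L₂, by simp, L₄, by simp,
      ne13, ne12, ne14, Ne.symm ne23, ne34, ne24,
      x₁, x₂, x₃, x₄, d12, d13, d14, d23, d24, d34, m1, m2, m3, m4⟩
  by_cases hBA : ∃ x, L₁ ∩ L₃ = {x} ∧ L₂ ∩ L₄ = {x}
  · -- bad matching {13,24}: cycle L₁-L₂-L₃-L₄
    obtain ⟨x0, ha1, ha2⟩ := hBA
    have dWY : (L₁ ∩ L₃).card ≤ 10 := by rw [ha1]; simp
    have dXZ : (L₂ ∩ L₄).card ≤ 10 := by rw [ha2]; simp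
    have nb2 : ¬ ∃ x, L₂ ∩ L₃ = {x} ∧ L₄ ∩ L₁ = {x} := by
      rintro ⟨y, hy1, hy2⟩
      rw [inter_comm] at hy2
      exact bc4_two_bad hc1 hc3 hc4 ne34
        ⟨x0, ha1, by rw [inter_comm]; exact ha2⟩ ⟨y, hy2, by rw [inter_comm]; exact hy1⟩
    obtain ⟨x₁, x₂, x₃, x₄, ⟨d12, d13, d14, d23, d24, d34⟩, m1, m2, m3, m4⟩ :=
      bc4_cycleFour hn hc1 hc2 hc3 hc4 dWY dXZ hBC nb2
    exact ⟨L₁, by simp, L₂, by simp, L₃, by simp, L₄, by simp,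
      ne12, ne13, ne14, ne23, ne24, ne34,
      x₁, x₂, x₃, x₄, d12, d13, d14, d23, d24, d34, m1, m2, m3, m4⟩
  by_cases hBB : ∃ x, L₁ ∩ L₄ = {x} ∧ L₂ ∩ L₃ = {x}
  · -- bad matching {14,23}: cycle L₁-L₂-L₄-L₃
    obtain ⟨x0, hb1, hb2⟩ := hBB
    have dWY : (L₁ ∩ L₄).card ≤ 10 := by rw [hb1]; simp
    have dXZ : (L₂ ∩ L₃).card ≤ 10 := by rw [hb2]; simp
    have nb1 : ¬ ∃ x, L₁ ∩ L₂ = {x} ∧ L₄ ∩ L₃ = {x} := by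
      rintro ⟨y, h1, h2⟩
      rw [inter_comm] at h2
      exact hBC ⟨y, h1, h2⟩
    have nb2 : ¬ ∃ x, L₂ ∩ L₄ = {x} ∧ L₃ ∩ L₁ = {x} := by
      rintro ⟨y, h1, h2⟩
      rw [inter_comm] at h2
      exact hBA ⟨y, h2, h1⟩
    obtain ⟨x₁, x₂, x₃, x₄, ⟨d12, d13, d14, d23, d24, d34⟩, m1, m2, m3, m4⟩ :=
      bc4_cycleFour hn hc1 hc2 hc4 hc3 dWY dXZ nb1 nb2
    exact ⟨L₁, by simp, L₂, by simp, L₄, by simp, L₃, by simp,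
      ne12, ne14, ne13, ne24, ne23, Ne.symm ne34,
      x₁, x₂, x₃, x₄, d12, d13, d14, d23, d24, d34, m1, m2, m3, m4⟩
  -- no bad matching at all
  by_cases hsA : (L₁ ∩ L₃).card ≤ 10 ∧ (L₂ ∩ L₄).card ≤ 10
  · -- small diagonal matching {13,24}: cycle L₁-L₂-L₃-L₄
    have nb2 : ¬ ∃ x, L₂ ∩ L₃ = {x} ∧ L₄ ∩ L₁ = {x} := by
      rintro ⟨y, h1, h2⟩
      rw [inter_comm] at h2
      exact hBB ⟨y, h2, h1⟩
    obtain ⟨x₁, x₂, x₃, x₄, ⟨d12, d13, d14, d23, d24, d34⟩, m1, m2, m3, m4⟩ :=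
      bc4_cycleFour hn hc1 hc2 hc3 hc4 hsA.1 hsA.2 hBC nb2
    exact ⟨L₁, by simp, L₂, by simp, L₃, by simp, L₄, by simp,
      ne12, ne13, ne14, ne23, ne24, ne34,
      x₁, x₂, x₃, x₄, d12, d13, d14, d23, d24, d34, m1, m2, m3, m4⟩
  by_cases hsB : (L₁ ∩ L₄).card ≤ 10 ∧ (L₂ ∩ L₃).card ≤ 10
  · -- small matching {14,23}: cycle L₁-L₂-L₄-L₃
    have nb1 : ¬ ∃ x, L₁ ∩ L₂ = {x} ∧ L₄ ∩ L₃ = {x} := by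
      rintro ⟨y, h1, h2⟩
      rw [inter_comm] at h2
      exact hBC ⟨y, h1, h2⟩
    have nb2 : ¬ ∃ x, L₂ ∩ L₄ = {x} ∧ L₃ ∩ L₁ = {x} := by
      rintro ⟨y, h1, h2⟩
      rw [inter_comm] at h2
      exact hBA ⟨y, h2, h1⟩
    obtain ⟨x₁, x₂, x₃, x₄, ⟨d12, d13, d14, d23, d24, d34⟩, m1, m2, m3, m4⟩ :=
      bc4_cycleFour hn hc1 hc2 hc4 hc3 hsB.1 hsB.2 nb1 nb2
    exact ⟨L₁, by simp, L₂, by simp, L₄, by simp, L₃, by simp,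
      ne12, ne14, ne13, ne24, ne23, Ne.symm ne34,
      x₁, x₂, x₃, x₄, d12, d13, d14, d23, d24, d34, m1, m2, m3, m4⟩
  by_cases hsC : (L₁ ∩ L₂).card ≤ 10 ∧ (L₃ ∩ L₄).card ≤ 10
  · -- small matching {12,34}: cycle L₁-L₃-L₂-L₄
    have nb2 : ¬ ∃ x, L₃ ∩ L₂ = {x} ∧ L₄ ∩ L₁ = {x} := by
      rintro ⟨y, h1, h2⟩
      rw [inter_comm] at h1 h2
      exact hBB ⟨y, h2, h1⟩
    obtain ⟨x₁, x₂, x₃, x₄, ⟨d12, d13, d14, d23, d24, d34⟩, m1, m2, m3, m4⟩ :=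
      bc4_cycleFour hn hc1 hc3 hc2 hc4 hsC.1 hsC.2 hBA nb2
    exact ⟨L₁, by simp, L₃, by simp, L₂, by simp, L₄, by simp,
      ne13, ne12, ne14, Ne.symm ne23, ne34, ne24,
      x₁, x₂, x₃, x₄, d12, d13, d14, d23, d24, d34, m1, m2, m3, m4⟩
  -- every matching has a big edge (≥ 11) among {14,23} and {12,34}
  have hB' : 11 ≤ (L₁ ∩ L₄).card ∨ 11 ≤ (L₂ ∩ L₃).card := by
    by_contra h
    push_neg at h
    exact hsB ⟨by omega, by omega⟩
  have hC' : 11 ≤ (L₁ ∩ L₂).card ∨ 11 ≤ (L₃ ∩ L₄).card := by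
    by_contra h
    push_neg at h
    exact hsC ⟨by omega, by omega⟩
  rcases hB' with hb | hb <;> rcases hC' with hcc | hcc
  · -- big L₁∩L₄ and L₁∩L₂; small edges L₂∩L₃, L₃∩L₄ share L₃
    have hi := bc4_incident_union_two hc3 hc2 hc4 ne24
    rw [inter_comm L₃ L₂] at hi
    have h3' : 3 ≤ (L₁ ∩ L₂).card := by omega
    have h4' : 4 ≤ (L₄ ∩ L₁).card := by rw [inter_comm]; omega
    obtain ⟨x₁, m1, x₂, m2, x₃, m3, x₄, m4, d12, d13, d14, d23, d24, d34⟩ :=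
      bc4_pick4' (bc4_inter_nonempty hc2 hc3) (bc4_inter_nonempty hc3 hc4) hi h3' h4'
    exact ⟨L₁, by simp, L₂, by simp, L₃, by simp, L₄, by simp,
      ne12, ne13, ne14, ne23, ne24, ne34,
      x₃, x₁, x₂, x₄, Ne.symm d13, Ne.symm d23, d34, d12, d14, d24, m3, m1, m2, m4⟩
  · -- big L₁∩L₄ and L₃∩L₄; small edges L₁∩L₂, L₂∩L₃ share L₂
    have hi := bc4_incident_union_two hc2 hc1 hc3 ne13
    rw [inter_comm L₂ L₁] at hi
    have h3' : 3 ≤ (L₃ ∩ L₄).card := by omega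
    have h4' : 4 ≤ (L₄ ∩ L₁).card := by rw [inter_comm]; omega
    obtain ⟨x₁, m1, x₂, m2, x₃, m3, x₄, m4, d12, d13, d14, d23, d24, d34⟩ :=
      bc4_pick4' (bc4_inter_nonempty hc1 hc2) (bc4_inter_nonempty hc2 hc3) hi h3' h4'
    exact ⟨L₁, by simp, L₂, by simp, L₃, by simp, L₄, by simp,
      ne12, ne13, ne14, ne23, ne24, ne34,
      x₁, x₂, x₃, x₄, d12, d13, d14, d23, d24, d34, m1, m2, m3, m4⟩
  · -- big L₂∩L₃ and L₁∩L₂; small edges L₃∩L₄, L₄∩L₁ share L₄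
    have hi := bc4_incident_union_two hc4 hc3 hc1 (Ne.symm ne13)
    rw [inter_comm L₄ L₃] at hi
    have h3' : 3 ≤ (L₂ ∩ L₃).card := by omega
    have h4' : 4 ≤ (L₁ ∩ L₂).card := by omega
    obtain ⟨x₁, m1, x₂, m2, x₃, m3, x₄, m4, d12, d13, d14, d23, d24, d34⟩ :=
      bc4_pick4' (bc4_inter_nonempty hc3 hc4) (bc4_inter_nonempty hc4 hc1) hi h3' h4'
    exact ⟨L₁, by simp, L₂, by simp, L₃, by simp, L₄, by simp,
      ne12, ne13, ne14, ne23, ne24, ne34,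
      x₄, x₃, x₁, x₂, Ne.symm d34, Ne.symm d14, Ne.symm d24,
      Ne.symm d13, Ne.symm d23, d12, m4, m3, m1, m2⟩
  · -- big L₂∩L₃ and L₃∩L₄; small edges L₄∩L₁, L₁∩L₂ share L₁
    have hi := bc4_incident_union_two hc1 hc4 hc2 (Ne.symm ne24)
    rw [inter_comm L₁ L₄] at hi
    have h3' : 3 ≤ (L₂ ∩ L₃).card := by omega
    have h4' : 4 ≤ (L₃ ∩ L₄).card := by omega
    obtain ⟨x₁, m1, x₂, m2, x₃, m3, x₄, m4, d12, d13, d14, d23, d24, d34⟩ :=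
      bc4_pick4' (bc4_inter_nonempty hc4 hc1) (bc4_inter_nonempty hc1 hc2) hi h3' h4'
    exact ⟨L₁, by simp, L₂, by simp, L₃, by simp, L₄, by simp,
      ne12, ne13, ne14, ne23, ne24, ne34,
      x₂, x₃, x₄, x₁, d23, d24, Ne.symm d12, d34, Ne.symm d13, Ne.symm d14,
      m2, m3, m4, m1⟩
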